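/- Let σ : A → A^+ be a substitution with |σ^n(a)| → ∞ as n → ∞ for every a ∈ A. Then X_σ = {w(m̄) : m̄ ∈ M₀} ∪ ⋃_{s̄ ∈ Λ} Orb_{T_σ}(w(s̄)), where Orb_{T_σ}(y) = {T_σ^k y : k ∈ ℤ}. -/

import Mathlib

open Filter Topology

namespace PaperStmt

variable {A : Type*} {B : Type*}

/-- Apply a substitution (letter-to-word map) to a word, by concatenation. -/
def substWord (σ : B → List A) (w : List B) : List A := w.flatMap σ

/-- `σ^n` applied to a word. -/
def substIter (σ : A → List A) (n : ℕ) (w : List A) : List A := (substWord σ)^[n] w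

/-- `σ^n(a)` for a letter `a`. -/
def substPow (σ : A → List A) (n : ℕ) (a : A) : List A := substIter σ n [a]

/-- The language of a substitution: factors of some `σ^n(a)`, `n ≥ 1`. -/
def Lang (σ : A → List A) : Set (List A) :=
  {w | ∃ a : A, ∃ n : ℕ, 1 ≤ n ∧ w <:+: substIter σ n [a]}

/-- The word `x[i], x[i+1], …, x[i+len-1]` read in a bi-infinite sequence. -/
def seg (x : ℤ → A) (i : ℤ) (len : ℕ) : List A :=
  (List.range len).map fun k => x (i + k)

/-- The phase space `X_σ` of the substitutional dynamical system. -/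
def Xsub (σ : A → List A) : Set (ℤ → A) :=
  {x | ∀ n : ℕ, seg x (-(n : ℤ)) (2 * n + 1) ∈ Lang σ}

/-- `L(X_σ)`: all finite words occurring in elements of `X_σ`. -/
def LangX (σ : A → List A) : Set (List A) :=
  {w | ∃ x ∈ Xsub σ, ∃ i : ℤ, seg x i w.length = w}

/-- The left shift `T`. -/
def shift (x : ℤ → A) : ℤ → A := fun k => x (k + 1)

/-- The power `T^i` of the left shift, `i ∈ ℤ`. -/
def shiftZ (i : ℤ) (x : ℤ → A) : ℤ → A := fun k => x (k + i)

/-- `(X_σ, T_σ)` has no periodic points. -/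
def Aperiodic (σ : A → List A) : Prop :=
  ∀ x ∈ Xsub σ, ∀ p : ℕ, 0 < p → shiftZ (p : ℤ) x ≠ x

/-- The coordinate at which the `n`-th block of the bi-infinite concatenation
`⋯ σ(x_{-1}).σ(x_0) σ(x_1) ⋯` starts (block `0` starts at coordinate `0`). -/
def blockStart (σ : B → List A) (x : ℤ → B) (n : ℤ) : ℤ :=
  if 0 ≤ n then ∑ j ∈ Finset.range n.toNat, ((σ (x (j : ℤ))).length : ℤ)
  else -∑ j ∈ Finset.range (-n).toNat, ((σ (x (-(j : ℤ) - 1))).length : ℤ)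

/-- `y` is the image of the bi-infinite sequence `x` under the substitution `σ`,
i.e. `y = ⋯ σ(x_{-1}).σ(x_0)σ(x_1)⋯` with `σ(x_0)` starting at coordinate `0`. -/
def IsSubstImage (σ : B → List A) (x : ℤ → B) (y : ℤ → A) : Prop :=
  ∀ n : ℤ, seg y (blockStart σ x n) (σ (x n)).length = σ (x n)

/-- `A_l`: the letters `a` with `|σ^n(a)| → ∞`. -/
def longLetters (σ : A → List A) : Set A :=
  {a | Tendsto (fun n => (substPow σ n a).length) atTop atTop}

/-- A minimal component of `(X_σ, T_σ)`: a nonempty closed shift-invariant subset of `X_σ`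
that is minimal with respect to inclusion. -/
def MinimalComponent [TopologicalSpace A] (σ : A → List A) (Z : Set (ℤ → A)) : Prop :=
  Z.Nonempty ∧ IsClosed Z ∧ Z ⊆ Xsub σ ∧ shift '' Z = Z ∧
    ∀ Z' : Set (ℤ → A), Z'.Nonempty → IsClosed Z' → Z' ⊆ Z → shift '' Z' = Z' → Z' = Z

/-- The element `T_σ^i σ^n([a])` of the Kakutani–Rokhlin partition `P_n`. -/
def piece (σ : A → List A) (n : ℕ) (a : A) (i : ℕ) : Set (ℤ → A) :=
  {x | ∃ y z : ℤ → A, y ∈ Xsub σ ∧ y 0 = a ∧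
    IsSubstImage (substPow σ n) y z ∧ x = shiftZ (i : ℤ) z}

/-- An `m`-primitive substitution, with respect to a decomposition
`A = P 0 ⊔ … ⊔ P (m-1) ⊔ A0`. -/
def IsMPrimitive (σ : A → List A) (m : ℕ) (P : Fin m → Set A) (A0 : Set A) : Prop :=
  (∀ i j : Fin m, i ≠ j → Disjoint (P i) (P j)) ∧
  (∀ i, Disjoint (P i) A0) ∧
  ((⋃ i, P i) ∪ A0 = Set.univ) ∧
  (∀ i, ∃ a ∈ P i, ∃ b ∈ P i, a ≠ b) ∧
  (∀ i, ∀ a ∈ P i, ∀ b ∈ σ a, b ∈ P i) ∧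
  (∀ i, ∀ a ∈ P i, ∀ b ∈ P i, ∃ n : ℕ, 1 ≤ n ∧ b ∈ substPow σ n a) ∧
  (∀ a : A, ∃ n : ℕ, 0 < n ∧ ∃ i, ∃ b ∈ P i, b ∈ substPow σ n a) ∧
  (∀ k : ℕ, 1 ≤ k → Lang (substPow σ k) = Lang σ) ∧
  (∀ a : A, [a] ∈ LangX σ)

/-- The set `Z_i` attached to the part `A_i = P i` of an `m`-primitive substitution. -/
def Zset (σ : A → List A) {m : ℕ} (P : Fin m → Set A) (i : Fin m) : Set (ℤ → A) :=
  {x | x ∈ Xsub σ ∧ ∀ n : ℕ, ∃ k : ℕ, 1 ≤ k ∧ ∃ a ∈ P i,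
    seg x (-(n : ℤ)) (2 * n + 1) <:+: substPow σ k a}

/-- The clopen set `W = ∪_i [r_i.l_i]` built from fixed points `w i`. -/
def Wset (σ : A → List A) {m : ℕ} (w : Fin m → ℤ → A) : Set (ℤ → A) :=
  ⋃ i : Fin m, {x | x ∈ Xsub σ ∧ x (-1) = w i (-1) ∧ x 0 = w i 0}

/-- A return word, given the letters `r i = w_i[-1]` and `l i = w_i[0]`. -/
def IsReturnWord (σ : A → List A) {m : ℕ} (r l : Fin m → A) (u : List A) : Prop :=
  u ∈ LangX σ ∧ u ≠ [] ∧ ∃ i j : Fin m,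
    (r i :: (u ++ [l j])) ∈ LangX σ ∧
    u.head? = some (l i) ∧ u.getLast? = some (r j) ∧
    ∀ t : Fin m, ¬ ([r t, l t] <:+: u)

/-- A proper substitution. -/
def IsProper (σ : A → List A) : Prop :=
  ∃ p : ℕ, 0 < p ∧ ∀ a : A,
    (∀ b c : A, [a, b] ∈ LangX σ → [a, c] ∈ LangX σ →
      (substPow σ p b).head? = (substPow σ p c).head?) ∧
    (∀ b c : A, [b, a] ∈ LangX σ → [c, a] ∈ LangX σ →
      (substPow σ p b).getLast? = (substPow σ p c).getLast?)

/-- Membership in the set `V` of words `v₁S₁v₂S₂v₃` with `v₁,v₂,v₃ ∈ A_l`, `S₁,S₂ ∈ A_s^*`. -/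
def Vcond (σ : A → List A) : A × List A × A × List A × A → Prop
  | (v1, S1, v2, S2, v3) =>
    v1 ∈ longLetters σ ∧ v2 ∈ longLetters σ ∧ v3 ∈ longLetters σ ∧
    (∀ c ∈ S1, c ∉ longLetters σ) ∧ (∀ c ∈ S2, c ∉ longLetters σ) ∧
    (v1 :: (S1 ++ v2 :: (S2 ++ [v3]))) ∈ LangX σ

/-- The cylinder set `[v₁S₁.v₂S₂v₃]`. -/
def Vbase (σ : A → List A) : A × List A × A × List A × A → Set (ℤ → A)
  | (v1, S1, v2, S2, v3) =>
    {x | x ∈ Xsub σ ∧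
      seg x (-(1 + S1.length : ℤ)) (v1 :: (S1 ++ v2 :: (S2 ++ [v3]))).length
        = v1 :: (S1 ++ v2 :: (S2 ++ [v3]))}

/-- The height `|σ^n(v₂S₂)|` of the tower over `[v₁S₁.v₂S₂v₃]` in `Ξ_n`. -/
def Vheight (σ : A → List A) (n : ℕ) : A × List A × A × List A × A → ℕ
  | (_, _, v2, S2, _) => (substWord (substPow σ n) (v2 :: S2)).length

/-- The element `T_σ^i σ^n([v₁S₁.v₂S₂v₃])` of the Kakutani–Rokhlin partition `Ξ_n`. -/
def Vpiece (σ : A → List A) (n : ℕ) (q : A × List A × A × List A × A) (i : ℕ) :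
    Set (ℤ → A) :=
  {x | ∃ y z : ℤ → A, y ∈ Vbase σ q ∧ IsSubstImage (substPow σ n) y z ∧
    x = shiftZ (i : ℤ) z}

/-- Membership in `Λ`. -/
def MemLambda (σ : A → List A) (s : ℕ → A × A) : Prop :=
  ∀ n : ℕ, [(s n).1, (s n).2] ∈ Lang σ ∧
    (σ (s (n + 1)).1).getLast? = some (s n).1 ∧
    (σ (s (n + 1)).2).head? = some (s n).2

/-- `x = w(s̄)` for `s̄ ∈ Λ`. -/
def IsLambdaPoint (σ : A → List A) (s : ℕ → A × A) (x : ℤ → A) : Prop :=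
  ∀ n : ℕ, seg x (-((substPow σ n (s n).1).length : ℤ))
      ((substPow σ n (s n).1).length + (substPow σ n (s n).2).length)
    = substPow σ n (s n).1 ++ substPow σ n (s n).2

/-- Membership in `M`: `i₀ = 0` and `a_j` occurs at position `i_{j+1}` of `σ(a_{j+1})`. -/
def MemM (σ : A → List A) (t : ℕ → A × ℕ) : Prop :=
  (t 0).2 = 0 ∧ ∀ j : ℕ, (σ (t (j + 1)).1)[(t (j + 1)).2]? = some (t j).1

/-- The cutting points `j_n` attached to an element of `M`. -/
def jSeq (σ : A → List A) (t : ℕ → A × ℕ) : ℕ → ℕ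
  | 0 => 0
  | n + 1 =>
      jSeq σ t n + (substWord (substPow σ n) ((σ (t (n + 1)).1).take (t (n + 1)).2)).length

/-- Membership in `M₀`: `j_n → ∞` and `|σ^n(a_n)| - j_n → ∞`. -/
def MZero (σ : A → List A) (t : ℕ → A × ℕ) : Prop :=
  MemM σ t ∧ ∀ N : ℕ, ∃ n0 : ℕ, ∀ n ≥ n0,
    N ≤ jSeq σ t n ∧ jSeq σ t n + N ≤ (substPow σ n (t n).1).length

/-- `x = w(m̄)` for `m̄ ∈ M₀`. -/
def IsMPoint (σ : A → List A) (t : ℕ → A × ℕ) (x : ℤ → A) : Prop :=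
  ∀ n : ℕ, seg x (-(jSeq σ t n : ℤ)) (substPow σ n (t n).1).length = substPow σ n (t n).1


section Aux

variable {A : Type*}

lemma substWord_append (σ : A → List A) (u v : List A) :
    substWord σ (u ++ v) = substWord σ u ++ substWord σ v := by
  simp [substWord]

lemma substWord_nil (σ : A → List A) : substWord σ [] = [] := rfl

lemma substWord_singleton (σ : A → List A) (a : A) : substWord σ [a] = σ a := by
  simp [substWord]

lemma substIter_zero (σ : A → List A) (w : List A) : substIter σ 0 w = w := rfl

lemma substIter_succ (σ : A → List A) (p : ℕ) (w : List A) :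
    substIter σ (p + 1) w = substIter σ p (substWord σ w) :=
  Function.iterate_succ_apply _ _ _

lemma substIter_succ' (σ : A → List A) (p : ℕ) (w : List A) :
    substIter σ (p + 1) w = substWord σ (substIter σ p w) :=
  Function.iterate_succ_apply' _ _ _

lemma substIter_nil (σ : A → List A) (p : ℕ) : substIter σ p [] = [] := by
  induction p with
  | zero => rfl
  | succ p ih => rw [substIter_succ', ih, substWord_nil]

lemma substIter_append (σ : A → List A) (p : ℕ) (u v : List A) :
    substIter σ p (u ++ v) = substIter σ p u ++ substIter σ p v := by
  induction p with
  | zero => rfl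
  | succ p ih => rw [substIter_succ', ih, substWord_append, substIter_succ', substIter_succ']

lemma substIter_add (σ : A → List A) (m n : ℕ) (w : List A) :
    substIter σ (m + n) w = substIter σ m (substIter σ n w) := by
  exact Function.iterate_add_apply (substWord σ) m n w

lemma substIter_infix (σ : A → List A) (p : ℕ) {u v : List A} (h : u <:+: v) :
    substIter σ p u <:+: substIter σ p v := by
  obtain ⟨s, t, rfl⟩ := h
  exact ⟨substIter σ p s, substIter σ p t, by rw [← substIter_append, ← substIter_append]⟩

lemma substIter_eq_flatMap (σ : A → List A) (p : ℕ) (w : List A) :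
    substIter σ p w = substWord (substPow σ p) w := by
  induction w with
  | nil => rw [substIter_nil]; rfl
  | cons a w ih =>
      have : a :: w = [a] ++ w := rfl
      rw [this, substIter_append, substWord_append, ih, substWord_singleton]
      rfl

lemma substWord_ne_nil (σ : A → List A) (hne : ∀ a, σ a ≠ []) {w : List A} (hw : w ≠ []) :
    substWord σ w ≠ [] := by
  cases w with
  | nil => exact absurd rfl hw
  | cons a w =>
      have : substWord σ (a :: w) = σ a ++ substWord σ w := by simp [substWord]
      rw [this]
      simp [hne a]

lemma substIter_ne_nil (σ : A → List A) (hne : ∀ a, σ a ≠ []) (p : ℕ) {w : List A}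
    (hw : w ≠ []) : substIter σ p w ≠ [] := by
  induction p with
  | zero => exact hw
  | succ p ih => rw [substIter_succ']; exact substWord_ne_nil σ hne ih

lemma substPow_length_pos (σ : A → List A) (hne : ∀ a, σ a ≠ []) (p : ℕ) (a : A) :
    0 < (substPow σ p a).length :=
  List.length_pos_iff.2 (substIter_ne_nil σ hne p (by simp))

lemma substIter_length_mono (σ : A → List A) (hne : ∀ a, σ a ≠ []) (p : ℕ) (w : List A) :
    w.length ≤ (substIter σ p w).length := by
  induction w with
  | nil => simp [substIter_nil]
  | cons a w ih =>
      have : a :: w = [a] ++ w := rfl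
      rw [this, substIter_append]
      simp only [List.length_append, List.length_cons, List.length_nil]
      have h1 := substPow_length_pos σ hne p a
      have h2 : (substIter σ p [a]).length = (substPow σ p a).length := rfl
      omega

/-! ### Lang lemmas -/

lemma lang_infix_closed {σ : A → List A} {u w : List A} (h : u <:+: w) (hw : w ∈ Lang σ) :
    u ∈ Lang σ := by
  obtain ⟨a, n, hn, hinf⟩ := hw
  exact ⟨a, n, hn, h.trans hinf⟩

lemma lang_substIter {σ : A → List A} {u : List A} (m : ℕ) (hu : u ∈ Lang σ) :
    substIter σ m u ∈ Lang σ := by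
  obtain ⟨a, n, hn, hinf⟩ := hu
  refine ⟨a, m + n, by omega, ?_⟩
  rw [substIter_add]
  exact substIter_infix σ m hinf

lemma lang_pair_step {σ : A → List A} {l b l' b' : A}
    (h : [l', b'] ∈ Lang σ) (hl : (σ l').getLast? = some l) (hb : (σ b').head? = some b) :
    [l, b] ∈ Lang σ := by
  have h1 : substIter σ 1 [l', b'] ∈ Lang σ := lang_substIter 1 h
  refine lang_infix_closed ?_ h1
  have hσ : substIter σ 1 [l', b'] = σ l' ++ σ b' := by
    have : ([l', b'] : List A) = [l'] ++ [b'] := rfl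
    rw [this, substIter_append]
    show substWord σ [l'] ++ substWord σ [b'] = _
    rw [substWord_singleton, substWord_singleton]
  rw [hσ]
  obtain ⟨u, hu⟩ := (List.getLast?_eq_some_iff).1 hl
  obtain ⟨v, hv⟩ : ∃ v, σ b' = b :: v := by
    cases hσb : σ b' with
    | nil => rw [hσb] at hb; simp at hb
    | cons c v => rw [hσb] at hb; simp at hb; exact ⟨v, by rw [hb]⟩
  rw [hu, hv]
  exact ⟨u, v, by simp⟩

/-! ### seg lemmas -/

lemma seg_eq_map (x : ℤ → A) (i : ℤ) (len : ℕ) :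
    seg x i len = (List.range len).map (fun k : ℕ => x (i + (k:ℤ))) := by
  unfold seg
  simp only [List.pure_def, List.bind_eq_flatMap, List.map_flatMap]
  induction (List.range len) with
  | nil => rfl
  | cons a l ih => simpa using ih

lemma seg_length (x : ℤ → A) (i : ℤ) (len : ℕ) : (seg x i len).length = len := by
  rw [seg_eq_map, List.length_map, List.length_range]

lemma seg_getElem? (x : ℤ → A) (i : ℤ) (len : ℕ) (t : ℕ) :
    (seg x i len)[t]? = if t < len then some (x (i + t)) else none := by
  rw [seg_eq_map, List.getElem?_map]
  by_cases h : t < len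
  · rw [List.getElem?_range h, if_pos h, Option.map_some]
  · rw [List.getElem?_eq_none (by rw [List.length_range]; omega), if_neg h, Option.map_none]

lemma seg_eq_iff (x : ℤ → A) (i : ℤ) (len : ℕ) (w : List A) :
    seg x i len = w ↔ w.length = len ∧ ∀ t, t < len → w[t]? = some (x (i + t)) := by
  constructor
  · rintro rfl
    refine ⟨seg_length x i len, fun t ht => ?_⟩
    rw [seg_getElem?, if_pos ht]
  · rintro ⟨hlen, h⟩
    apply List.ext_getElem?
    intro t
    rw [seg_getElem?]
    split
    · exact (h t (by omega)).symm
    · exact (List.getElem?_eq_none (by omega)).symm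

lemma seg_append (x : ℤ → A) (i : ℤ) (m n : ℕ) :
    seg x i (m + n) = seg x i m ++ seg x (i + m) n := by
  apply List.ext_getElem?
  intro t
  rw [seg_getElem?]
  by_cases ht : t < m
  · rw [List.getElem?_append_left (by rw [seg_length]; omega), seg_getElem?,
      if_pos (show t < m + n by omega), if_pos ht]
  · rw [List.getElem?_append_right (by rw [seg_length]; omega), seg_length, seg_getElem?]
    by_cases ht2 : t < m + n
    · rw [if_pos ht2, if_pos (by omega)]
      congr 2
      omega
    · rw [if_neg ht2, if_neg (by omega)]

lemma seg_shiftZ (x : ℤ → A) (d i : ℤ) (len : ℕ) :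
    seg (shiftZ d x) i len = seg x (i + d) len := by
  apply List.ext_getElem?
  intro t
  rw [seg_getElem?, seg_getElem?]
  split
  · show some (x (i + t + d)) = some (x (i + d + t))
    congr 2
    ring
  · rfl

lemma seg_split {x : ℤ → A} {i : ℤ} {w₁ w₂ : List A}
    (h : seg x i (w₁.length + w₂.length) = w₁ ++ w₂) :
    seg x i w₁.length = w₁ ∧ seg x (i + w₁.length) w₂.length = w₂ := by
  rw [seg_append] at h
  have := List.append_inj h (by rw [seg_length])
  exact this

lemma seg_infix {x : ℤ → A} {i : ℤ} {L : ℕ} {w : List A} (h : seg x i L = w)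
    (d L' : ℕ) (hd : d + L' ≤ L) : seg x (i + d) L' <:+: w := by
  have hL : L = d + (L' + (L - d - L')) := by omega
  rw [hL, seg_append, seg_append] at h
  exact ⟨seg x i d, seg x (i + d + L') (L - d - L'), by rw [← h]; simp⟩

end Aux


section Decomp

variable {A : Type*}

lemma substWord_cons (σ : A → List A) (c : A) (u : List A) :
    substWord σ (c :: u) = σ c ++ substWord σ u := by
  simp [substWord]

lemma substIter_cons (σ : A → List A) (p : ℕ) (c : A) (u : List A) :
    substIter σ p (c :: u) = substPow σ p c ++ substIter σ p u := by
  have : c :: u = [c] ++ u := rfl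
  rw [this, substIter_append]; rfl

lemma substPow_zero (σ : A → List A) (a : A) : substPow σ 0 a = [a] := rfl

lemma substPow_succ (σ : A → List A) (p : ℕ) (a : A) :
    substPow σ (p + 1) a = substIter σ p (σ a) := by
  show substIter σ (p + 1) [a] = _
  rw [substIter_succ, substWord_singleton]

/-- Decompose a position `q` inside `σ^p(u)` into the sub-block structure. -/
def decomp (σ : A → List A) (d₀ : A) (p : ℕ) : List A → ℕ → List A × A × List A
  | [], _ => ([], d₀, [])
  | c :: u, q =>
      if q < (substPow σ p c).length then ([], c, u)
      else
        let r := decomp σ d₀ p u (q - (substPow σ p c).length)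
        (c :: r.1, r.2.1, r.2.2)

lemma decomp_spec (σ : A → List A) (d₀ : A) (p : ℕ) (u : List A) (q : ℕ)
    (h : q < (substIter σ p u).length) :
    u = (decomp σ d₀ p u q).1 ++ (decomp σ d₀ p u q).2.1 :: (decomp σ d₀ p u q).2.2 ∧
    (substIter σ p (decomp σ d₀ p u q).1).length ≤ q ∧
    q < (substIter σ p (decomp σ d₀ p u q).1).length
        + (substPow σ p (decomp σ d₀ p u q).2.1).length := by
  induction u generalizing q with
  | nil => rw [substIter_nil] at h; simp at h
  | cons c u ih =>
      rw [substIter_cons, List.length_append] at h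
      by_cases hq : q < (substPow σ p c).length
      · simp [decomp, hq, substIter_nil]
      · have h' : q - (substPow σ p c).length < (substIter σ p u).length := by omega
        obtain ⟨h1, h2, h3⟩ := ih _ h'
        simp only [decomp, if_neg hq]
        refine ⟨by rw [List.cons_append]; exact congrArg (c :: ·) h1, ?_, ?_⟩
        · rw [substIter_cons, List.length_append]; omega
        · rw [substIter_cons, List.length_append]; omega

lemma decomp_append_left (σ : A → List A) (d₀ : A) (p : ℕ) (v w : List A) (q : ℕ)
    (h : q < (substIter σ p v).length) :
    decomp σ d₀ p (v ++ w) q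
      = ((decomp σ d₀ p v q).1, (decomp σ d₀ p v q).2.1, (decomp σ d₀ p v q).2.2 ++ w) := by
  induction v generalizing q with
  | nil => rw [substIter_nil] at h; simp at h
  | cons c v ih =>
      rw [substIter_cons, List.length_append] at h
      by_cases hq : q < (substPow σ p c).length
      · simp [decomp, hq]
      · have h' : q - (substPow σ p c).length < (substIter σ p v).length := by omega
        simp [decomp, hq, ih _ h']

lemma decomp_append_right (σ : A → List A) (d₀ : A) (p : ℕ) (v w : List A) (q : ℕ)
    (h : (substIter σ p v).length ≤ q) :
    decomp σ d₀ p (v ++ w) q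
      = (v ++ (decomp σ d₀ p w (q - (substIter σ p v).length)).1,
         (decomp σ d₀ p w (q - (substIter σ p v).length)).2.1,
         (decomp σ d₀ p w (q - (substIter σ p v).length)).2.2) := by
  induction v generalizing q with
  | nil => simp [substIter_nil]
  | cons c v ih =>
      rw [substIter_cons, List.length_append] at h
      have hq : ¬ q < (substPow σ p c).length := by omega
      have h' : (substIter σ p v).length ≤ q - (substPow σ p c).length := by omega
      have harith : q - (substPow σ p c).length - (substIter σ p v).length
          = q - (substIter σ p (c :: v)).length := by
        rw [substIter_cons, List.length_append]; omega
      simp only [List.cons_append, decomp, if_neg hq, List.append_eq, ih _ h', harith]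

lemma decomp_refine (σ : A → List A) (d₀ : A) (p : ℕ) (u : List A) (q : ℕ)
    (h : q < (substIter σ (p+1) u).length) :
    decomp σ d₀ p (substWord σ u) q
      = (substWord σ (decomp σ d₀ (p+1) u q).1
           ++ (decomp σ d₀ p (σ (decomp σ d₀ (p+1) u q).2.1)
                (q - (substIter σ (p+1) (decomp σ d₀ (p+1) u q).1).length)).1,
         (decomp σ d₀ p (σ (decomp σ d₀ (p+1) u q).2.1)
                (q - (substIter σ (p+1) (decomp σ d₀ (p+1) u q).1).length)).2.1,
         (decomp σ d₀ p (σ (decomp σ d₀ (p+1) u q).2.1)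
                (q - (substIter σ (p+1) (decomp σ d₀ (p+1) u q).1).length)).2.2
           ++ substWord σ (decomp σ d₀ (p+1) u q).2.2) := by
  obtain ⟨h1, h2, h3⟩ := decomp_spec σ d₀ (p+1) u q h
  set U₁ := (decomp σ d₀ (p+1) u q).1 with hU₁
  set b' := (decomp σ d₀ (p+1) u q).2.1 with hb'
  set U₂ := (decomp σ d₀ (p+1) u q).2.2 with hU₂
  have hsw : substWord σ u = substWord σ U₁ ++ (σ b' ++ substWord σ U₂) := by
    conv_lhs => rw [h1]
    rw [substWord_append, substWord_cons]
  have hlen1 : (substIter σ p (substWord σ U₁)).length ≤ q := by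
    rw [← substIter_succ]; exact h2
  have hlen1' : substIter σ p (substWord σ U₁) = substIter σ (p+1) U₁ :=
    (substIter_succ σ p U₁).symm
  have hj' : q - (substIter σ (p+1) U₁).length < (substIter σ p (σ b')).length := by
    rw [← substPow_succ]; omega
  rw [hsw, decomp_append_right σ d₀ p _ _ q hlen1, hlen1',
    decomp_append_left σ d₀ p _ _ _ hj']

end Decomp


section Window

variable {A : Type*}

lemma seg_of_middle {x : ℤ → A} {n : ℕ} {l W r P v S : List A}
    (hW : l ++ W ++ r = P ++ v ++ S) (hseg : seg x (-(n:ℤ)) (2*n+1) = W)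
    (h1 : l.length ≤ P.length) (h2 : P.length + v.length ≤ l.length + (2*n+1)) :
    seg x ((P.length : ℤ) - (l.length + n)) v.length = v := by
  have hWlen : W.length = 2*n+1 := by rw [← hseg, seg_length]
  rw [seg_eq_iff]
  refine ⟨rfl, fun t ht => ?_⟩
  have key : (l ++ W ++ r)[P.length + t]? = v[t]? := by
    rw [hW, List.append_assoc, List.getElem?_append_right (by omega)]
    have : P.length + t - P.length = t := by omega
    rw [this, List.getElem?_append_left ht]
  have key2 : (l ++ W ++ r)[P.length + t]? = some (x (-(n:ℤ) + (P.length + t - l.length : ℕ))) := by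
    rw [List.append_assoc, List.getElem?_append_right (by omega),
      List.getElem?_append_left (by omega), ← hseg, seg_getElem?, if_pos (by omega)]
  rw [key.symm.trans key2]
  congr 2
  push_cast [Nat.cast_sub (show l.length ≤ P.length + t by omega)]
  ring

variable [Fintype A]

/-- Max length of `σ^p` over all letters. -/
def Lsup (σ : A → List A) (p : ℕ) : ℕ :=
  Finset.univ.sup fun b => (substPow σ p b).length

lemma le_Lsup (σ : A → List A) (p : ℕ) (b : A) : (substPow σ p b).length ≤ Lsup σ p := by
  exact Finset.le_sup (f := fun c => (substPow σ p c).length) (Finset.mem_univ b)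

/-- The state (left neighbor, block letter, right neighbor, offset of coordinate `0`)
extracted from a window occurrence. -/
def windowSt (σ : A → List A) (d₀ : A) (k : ℕ) (a : A) (q : ℕ) (p : ℕ) : A × A × A × ℕ :=
  let D := decomp σ d₀ p (substIter σ (k - p) [a]) q
  (D.1.getLastD d₀, D.2.1, D.2.2.headD d₀, q - (substIter σ p D.1).length)

/-- The "good state" predicate: realizations in `x` and language conditions. -/
def GoodSt (σ : A → List A) (x : ℤ → A) (p : ℕ) (s : A × A × A × ℕ) : Prop :=
  s.2.2.2 < (substPow σ p s.2.1).length ∧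
  seg x (-(s.2.2.2 : ℤ)) (substPow σ p s.2.1).length = substPow σ p s.2.1 ∧
  seg x (-(s.2.2.2 : ℤ) - (substPow σ p s.1).length) (substPow σ p s.1).length
    = substPow σ p s.1 ∧
  seg x (-(s.2.2.2 : ℤ) + (substPow σ p s.2.1).length) (substPow σ p s.2.2.1).length
    = substPow σ p s.2.2.1 ∧
  [s.1, s.2.1] ∈ Lang σ ∧ [s.2.1, s.2.2.1] ∈ Lang σ

/-- The link between consecutive levels of the chain. -/
def LinkSt (σ : A → List A) (p : ℕ) (s s' : A × A × A × ℕ) : Prop :=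
  ∃ i : ℕ, (σ s'.2.1)[i]? = some s.2.1 ∧
    s'.2.2.2 = s.2.2.2 + (substWord (substPow σ p) ((σ s'.2.1).take i)).length ∧
    (i = 0 → (σ s'.1).getLast? = some s.1 ∧ (σ s'.2.1).head? = some s.2.1) ∧
    (i + 1 = (σ s'.2.1).length →
      (σ s'.2.1).getLast? = some s.2.1 ∧ (σ s'.2.2.1).head? = some s.2.2.1) ∧
    (substPow σ (p+1) s'.2.1).length
      = s'.2.2.2 + ((substPow σ p s.2.1).length - s.2.2.2)
        + (substWord (substPow σ p) ((σ s'.2.1).drop (i+1))).length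

lemma window_core (σ : A → List A) (hne : ∀ a, σ a ≠ []) (d₀ : A) (x : ℤ → A)
    (n k p : ℕ) (a : A) (l r : List A)
    (heq : substIter σ k [a] = l ++ seg x (-(n:ℤ)) (2*n+1) ++ r)
    (hk : p + 1 ≤ k) (hn : 2 * Lsup σ p ≤ n) :
    (decomp σ d₀ p (substIter σ (k - p) [a]) (l.length + n)).1 ≠ [] ∧
    (decomp σ d₀ p (substIter σ (k - p) [a]) (l.length + n)).2.2 ≠ [] ∧
    GoodSt σ x p (windowSt σ d₀ k a (l.length + n) p) := by
  set q := l.length + n with hq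
  set u := substIter σ (k - p) [a] with hudef
  have hu : substIter σ p u = substIter σ k [a] := by
    rw [hudef, ← substIter_add]
    congr 1
    omega
  have hlen : (substIter σ p u).length = l.length + (2*n+1) + r.length := by
    rw [hu, heq]
    simp [seg_length]
    omega
  have hqlt : q < (substIter σ p u).length := by omega
  obtain ⟨h1, h2, h3⟩ := decomp_spec σ d₀ p u q hqlt
  set u₁ := (decomp σ d₀ p u q).1 with hu₁
  set b := (decomp σ d₀ p u q).2.1 with hb
  set u₂ := (decomp σ d₀ p u q).2.2 with hu₂
  set sβ := (substIter σ p u₁).length with hsβ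
  set j := q - sβ with hj
  have hLb : (substPow σ p b).length ≤ Lsup σ p := le_Lsup σ p b
  have hjb : j < (substPow σ p b).length := by omega
  -- u₁ nonempty
  have hu₁ne : u₁ ≠ [] := by
    intro hnil
    rw [hnil, substIter_nil] at hsβ
    simp at hsβ
    omega
  -- u₂ nonempty
  have hu₂ne : u₂ ≠ [] := by
    intro hnil
    have : u = u₁ ++ [b] := by rw [h1, hnil]
    have hlen2 : (substIter σ p u).length = sβ + (substPow σ p b).length := by
      rw [this, substIter_append, List.length_append, ← hsβ]
      congr 1
    omega
  set lam := u₁.getLastD d₀ with hlam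
  set rho := u₂.headD d₀ with hrho
  have hu₁split : u₁ = u₁.dropLast ++ [lam] := by
    rw [hlam, List.getLastD_eq_getLast? , List.getLast?_eq_getLast hu₁ne]
    simp [List.dropLast_append_getLast hu₁ne]
  have hu₂split : u₂ = rho :: u₂.tail := by
    rw [hrho, List.headD_eq_head? , List.head?_eq_head hu₂ne]
    simp
  have hLlam : (substPow σ p lam).length ≤ Lsup σ p := le_Lsup σ p lam
  have hLrho : (substPow σ p rho).length ≤ Lsup σ p := le_Lsup σ p rho
  have hlampos := substPow_length_pos σ hne p lam
  have hbpos := substPow_length_pos σ hne p b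
  have hrhopos := substPow_length_pos σ hne p rho
  -- big decomposition of σ^p u
  have hsplit : l ++ seg x (-(n:ℤ)) (2*n+1) ++ r
      = substIter σ p u₁ ++ substPow σ p b ++ substIter σ p u₂ := by
    rw [← heq, ← hu]
    conv_lhs => rw [h1]
    rw [substIter_append, substIter_cons, ← List.append_assoc]
  refine ⟨hu₁ne, hu₂ne, ?_, ?_, ?_, ?_, ?_, ?_⟩
  · show j < (substPow σ p b).length
    exact hjb
  · -- central block realization
    show seg x (-(j:ℤ)) (substPow σ p b).length = substPow σ p b
    have := seg_of_middle (x := x) (n := n) hsplit rfl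
      (P := substIter σ p u₁) (v := substPow σ p b) (S := substIter σ p u₂)
      (by omega) (by omega)
    rw [show ((substIter σ p u₁).length : ℤ) - (l.length + n) = -(j:ℤ) by push_cast; omega] at this
    exact this
  · -- left block realization
    show seg x (-(j:ℤ) - (substPow σ p lam).length) (substPow σ p lam).length
        = substPow σ p lam
    have hsplit2 : l ++ seg x (-(n:ℤ)) (2*n+1) ++ r
        = substIter σ p u₁.dropLast ++ substPow σ p lam
          ++ (substPow σ p b ++ substIter σ p u₂) := by
      rw [hsplit]
      conv_lhs => rw [hu₁split]
      rw [substIter_append]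
      have : substIter σ p [lam] = substPow σ p lam := rfl
      rw [this, List.append_assoc]
    have hd : (substIter σ p u₁.dropLast).length
        = sβ - (substPow σ p lam).length := by
      conv_rhs => rw [hsβ]
      conv_rhs => rw [hu₁split]
      rw [substIter_append, List.length_append]
      have : substIter σ p [lam] = substPow σ p lam := rfl
      rw [this]
      omega
    have hlamle : (substPow σ p lam).length ≤ sβ := by
      conv_rhs => rw [hsβ]
      conv_rhs => rw [hu₁split]
      rw [substIter_append, List.length_append]
      have : substIter σ p [lam] = substPow σ p lam := rfl
      rw [this]
      omega
    have := seg_of_middle (x := x) (n := n) hsplit2 rfl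
      (P := substIter σ p u₁.dropLast) (v := substPow σ p lam) (S := _)
      (by omega) (by omega)
    rw [show ((substIter σ p u₁.dropLast).length : ℤ) - (l.length + n)
        = -(j:ℤ) - (substPow σ p lam).length by
      rw [hd]; push_cast [Nat.cast_sub hlamle]; omega] at this
    exact this
  · -- right block realization
    show seg x (-(j:ℤ) + (substPow σ p b).length) (substPow σ p rho).length
        = substPow σ p rho
    have hsplit3 : l ++ seg x (-(n:ℤ)) (2*n+1) ++ r
        = (substIter σ p u₁ ++ substPow σ p b) ++ substPow σ p rho
          ++ substIter σ p u₂.tail := by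
      rw [hsplit]
      conv_lhs => rw [hu₂split]
      rw [substIter_cons, List.append_assoc, List.append_assoc, List.append_assoc]
    have := seg_of_middle (x := x) (n := n) hsplit3 rfl
      (P := substIter σ p u₁ ++ substPow σ p b) (v := substPow σ p rho) (S := _)
      (by rw [List.length_append]; omega) (by rw [List.length_append]; omega)
    rw [show (((substIter σ p u₁ ++ substPow σ p b)).length : ℤ) - (l.length + n)
        = -(j:ℤ) + (substPow σ p b).length by
      rw [List.length_append]; push_cast; omega] at this
    exact this
  · -- [lam, b] ∈ Lang
    show [lam, b] ∈ Lang σ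
    refine ⟨a, k - p, by omega, ?_⟩
    refine ⟨u₁.dropLast, u₂, ?_⟩
    rw [← hudef, h1]
    conv_rhs => rw [hu₁split]
    simp
  · -- [b, rho] ∈ Lang
    show [b, rho] ∈ Lang σ
    refine ⟨a, k - p, by omega, ?_⟩
    refine ⟨u₁, u₂.tail, ?_⟩
    rw [← hudef, h1]
    conv_rhs => rw [hu₂split]
    simp

end Window


section WindowLink

variable {A : Type*}

lemma getLast?_of_ne_nil {l : List A} (h : l ≠ []) (d : A) :
    l.getLast? = some (l.getLastD d) := by
  rw [List.getLastD_eq_getLast?, List.getLast?_eq_getLast h]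
  simp

lemma head?_of_ne_nil {l : List A} (h : l ≠ []) (d : A) :
    l.head? = some (l.headD d) := by
  rw [List.headD_eq_head?, List.head?_eq_head h]
  simp

lemma getLast?_append_right {l m : List A} (h : m ≠ []) :
    (l ++ m).getLast? = m.getLast? := by
  rw [List.getLast?_append, List.getLast?_eq_getLast h]
  rfl

variable [Fintype A]

lemma window_link (σ : A → List A) (hne : ∀ a, σ a ≠ []) (d₀ : A) (x : ℤ → A)
    (n k p : ℕ) (a : A) (l r : List A)
    (heq : substIter σ k [a] = l ++ seg x (-(n:ℤ)) (2*n+1) ++ r)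
    (hk : p + 2 ≤ k) (hnp1 : 2 * Lsup σ (p+1) ≤ n) :
    LinkSt σ p (windowSt σ d₀ k a (l.length + n) p)
      (windowSt σ d₀ k a (l.length + n) (p+1)) := by
  set q := l.length + n with hqdef
  obtain ⟨hU₁ne, hU₂ne, _⟩ :=
    window_core σ hne d₀ x n k (p+1) a l r heq (by omega) hnp1
  set u' := substIter σ (k - (p+1)) [a] with hu'def
  have hsw : substWord σ u' = substIter σ (k - p) [a] := by
    rw [hu'def, ← substIter_succ']
    congr 1
    omega
  have hu'len : substIter σ (p+1) u' = substIter σ k [a] := by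
    rw [hu'def, ← substIter_add]
    congr 1
    omega
  have hlen : (substIter σ (p+1) u').length = l.length + (2*n+1) + r.length := by
    rw [hu'len, heq]
    simp [seg_length]
    omega
  have hq' : q < (substIter σ (p+1) u').length := by omega
  obtain ⟨H1, H2, H3⟩ := decomp_spec σ d₀ (p+1) u' q hq'
  set U₁ := (decomp σ d₀ (p+1) u' q).1 with hU₁
  set b' := (decomp σ d₀ (p+1) u' q).2.1 with hb'
  set U₂ := (decomp σ d₀ (p+1) u' q).2.2 with hU₂
  set j' := q - (substIter σ (p+1) U₁).length with hj'
  have hj'lt : j' < (substIter σ p (σ b')).length := by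
    rw [← substPow_succ]
    omega
  obtain ⟨G1, G2, G3⟩ := decomp_spec σ d₀ p (σ b') j' hj'lt
  set w₁ := (decomp σ d₀ p (σ b') j').1 with hw₁
  set bp := (decomp σ d₀ p (σ b') j').2.1 with hbp
  set w₂ := (decomp σ d₀ p (σ b') j').2.2 with hw₂
  have hdec : decomp σ d₀ p (substIter σ (k - p) [a]) q
      = (substWord σ U₁ ++ w₁, bp, w₂ ++ substWord σ U₂) := by
    rw [← hsw]
    exact decomp_refine σ d₀ p u' q hq'
  have hwgen : ∀ D : List A × A × List A, decomp σ d₀ p (substIter σ (k-p) [a]) q = D →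
      windowSt σ d₀ k a q p
        = (D.1.getLastD d₀, D.2.1, D.2.2.headD d₀, q - (substIter σ p D.1).length) := by
    rintro D rfl
    rfl
  have hwp0 := hwgen _ hdec
  have hwp : windowSt σ d₀ k a q p
      = ((substWord σ U₁ ++ w₁).getLastD d₀, bp, (w₂ ++ substWord σ U₂).headD d₀,
         q - (substIter σ p (substWord σ U₁ ++ w₁)).length) := hwp0
  have hwp1 : windowSt σ d₀ k a q (p+1) = (U₁.getLastD d₀, b', U₂.headD d₀, j') := rfl
  rw [hwp, hwp1]
  -- lengths bookkeeping
  have hlen1 : substIter σ p (substWord σ U₁ ++ w₁)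
      = substIter σ (p+1) U₁ ++ substIter σ p w₁ := by
    rw [substIter_append, substIter_succ]
  have hσb' : σ b' = w₁ ++ bp :: w₂ := G1
  have hpow : substPow σ (p+1) b' = substIter σ p w₁ ++ (substPow σ p bp ++ substIter σ p w₂) := by
    rw [substPow_succ, hσb', substIter_append, substIter_cons]
  refine ⟨w₁.length, ?_, ?_, ?_, ?_, ?_⟩
  · show (σ b')[w₁.length]? = some bp
    rw [hσb', List.getElem?_append_right (Nat.le_refl _)]
    simp
  · show j' = (q - (substIter σ p (substWord σ U₁ ++ w₁)).length)
        + (substWord (substPow σ p) ((σ b').take w₁.length)).length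
    rw [hσb', List.take_left, ← substIter_eq_flatMap, hlen1, List.length_append]
    omega
  · intro hi0
    have hw₁nil : w₁ = [] := List.length_eq_zero_iff.1 hi0
    constructor
    · show (σ (U₁.getLastD d₀)).getLast? = some ((substWord σ U₁ ++ w₁).getLastD d₀)
      have hU₁split : U₁ = U₁.dropLast ++ [U₁.getLastD d₀] := by
        rw [List.getLastD_eq_getLast?, List.getLast?_eq_getLast hU₁ne]
        simp [List.dropLast_append_getLast hU₁ne]
      have hne' : σ (U₁.getLastD d₀) ≠ [] := hne _
      have hswu : substWord σ U₁ = substWord σ U₁.dropLast ++ σ (U₁.getLastD d₀) := by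
        conv_lhs => rw [hU₁split]
        rw [substWord_append, substWord_singleton]
      have hswne : substWord σ U₁ ++ w₁ ≠ [] := by
        rw [hw₁nil, List.append_nil, hswu]
        exact fun hc => hne' (List.append_eq_nil_iff.1 hc).2
      rw [← getLast?_of_ne_nil hswne d₀, hw₁nil, List.append_nil, hswu,
        getLast?_append_right hne']
    · show (σ b').head? = some bp
      rw [hσb', hw₁nil]
      rfl
  · intro hilen0
    replace hilen : w₁.length + 1 = (σ b').length := hilen0
    have hw₂nil : w₂ = [] := by
      have h5 : (σ b').length = w₁.length + 1 + w₂.length := by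
        rw [hσb', List.length_append, List.length_cons]
        omega
      have h6 : w₂.length = 0 := by omega
      exact List.length_eq_zero_iff.1 h6
    constructor
    · show (σ b').getLast? = some bp
      rw [hσb', hw₂nil]
      exact List.getLast?_concat
    · show (σ (U₂.headD d₀)).head? = some ((w₂ ++ substWord σ U₂).headD d₀)
      have hU₂split : U₂ = U₂.headD d₀ :: U₂.tail := by
        rw [List.headD_eq_head?, List.head?_eq_head hU₂ne]
        simp
      have hne' : σ (U₂.headD d₀) ≠ [] := hne _
      have hswu : substWord σ U₂ = σ (U₂.headD d₀) ++ substWord σ U₂.tail := by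
        conv_lhs => rw [hU₂split]
        rw [substWord_cons]
      have hswne : w₂ ++ substWord σ U₂ ≠ [] := by
        rw [hw₂nil, List.nil_append, hswu]
        exact fun hc => hne' (List.append_eq_nil_iff.1 hc).1
      rw [← head?_of_ne_nil hswne d₀, hw₂nil, List.nil_append, hswu, List.head?_append,
        head?_of_ne_nil hne' d₀]
      rfl
  · show (substPow σ (p+1) b').length
      = j' + ((substPow σ p bp).length - (q - (substIter σ p (substWord σ U₁ ++ w₁)).length))
        + (substWord (substPow σ p) ((σ b').drop (w₁.length + 1))).length
    have hdrop : (σ b').drop (w₁.length + 1) = w₂ := by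
      rw [hσb']
      have : w₁ ++ bp :: w₂ = (w₁ ++ [bp]) ++ w₂ := by simp
      rw [this, List.drop_left' (by simp)]
    rw [hdrop, ← substIter_eq_flatMap, hpow, hlen1]
    simp only [List.length_append]
    omega

end WindowLink


section Chain

lemma pigeon_infinite {St : Type*} (f : ℕ → St) (V : Set St) (hV : V.Finite)
    (I : Set ℕ) (hI : I.Infinite) (hmem : ∀ n ∈ I, f n ∈ V) :
    ∃ v, {n ∈ I | f n = v}.Infinite := by
  by_contra h
  push_neg at h
  have hsub : I ⊆ ⋃ v ∈ V, {n ∈ I | f n = v} := fun n hn =>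
    Set.mem_biUnion (hmem n hn) ⟨hn, rfl⟩
  exact hI (Set.Finite.subset (hV.biUnion fun v _ => h v) hsub)

lemma konig_chain {St : Type*} (D : ℕ → ℕ → St) (B : ℕ → ℕ)
    (pig : ∀ (p : ℕ) (I : Set ℕ), I.Infinite →
      ∃ v : St, {n ∈ I | B p ≤ n ∧ D n p = v}.Infinite) :
    ∃ c : ℕ → St, ∀ p : ℕ, ∃ n, B p ≤ n ∧ D n p = c p ∧ D n (p+1) = c (p+1) := by
  classical
  let T : ℕ → Type _ := fun p => {cI : (ℕ → St) × Set ℕ //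
      cI.2.Infinite ∧ ∀ n ∈ cI.2, ∀ q, q ≤ p → B q ≤ n ∧ D n q = cI.1 q}
  let F0 : T 0 :=
    ⟨(fun _ => (pig 0 Set.univ Set.infinite_univ).choose,
      {n ∈ Set.univ | B 0 ≤ n ∧ D n 0 = (pig 0 Set.univ Set.infinite_univ).choose}),
     (pig 0 Set.univ Set.infinite_univ).choose_spec, by
       rintro n ⟨-, hB, hD⟩ q hq
       rw [Nat.le_zero.1 hq]
       exact ⟨hB, hD⟩⟩
  let step : ∀ p : ℕ, T p → T (p+1) := fun p prev =>
    ⟨(Function.update prev.1.1 (p+1) (pig (p+1) prev.1.2 prev.2.1).choose,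
      {n ∈ prev.1.2 | B (p+1) ≤ n ∧ D n (p+1) = (pig (p+1) prev.1.2 prev.2.1).choose}),
     (pig (p+1) prev.1.2 prev.2.1).choose_spec, by
       dsimp only
       rintro n ⟨hnI, hB, hD⟩ q hq
       rcases Nat.lt_or_ge q (p+1) with h | h
       · rw [Function.update_of_ne (by omega)]
         exact prev.2.2 n hnI q (by omega)
       · have hq' : q = p+1 := by omega
         subst hq'
         rw [Function.update_self]
         exact ⟨hB, hD⟩⟩
  let F : ∀ p : ℕ, T p := fun p => Nat.rec F0 step p
  have hupd : ∀ p q, q ≠ p+1 → (F (p+1)).1.1 q = (F p).1.1 q := by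
    intro p q h
    exact Function.update_of_ne h _ _
  have hstab : ∀ P q, q ≤ P → (F P).1.1 q = (F q).1.1 q := by
    intro P
    induction P with
    | zero => intro q hq; rw [Nat.le_zero.1 hq]
    | succ P ih =>
        intro q hq
        rcases Nat.lt_or_ge q (P+1) with h | h
        · rw [hupd P q (by omega)]
          exact ih q (by omega)
        · have : q = P+1 := by omega
          subst this
          rfl
  refine ⟨fun p => (F p).1.1 p, fun p => ?_⟩
  obtain ⟨n, hn⟩ := (F (p+1)).2.1.nonempty
  have inv := (F (p+1)).2.2 n hn
  obtain ⟨hB1, hD1⟩ := inv p (by omega)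
  obtain ⟨hB2, hD2⟩ := inv (p+1) (le_refl _)
  refine ⟨n, hB1, ?_, ?_⟩
  · rw [hD1, hstab (p+1) p (by omega)]
  · rw [hD2]

variable {A : Type*} [Fintype A]

/-- The `n`-threshold for level `p` data. -/
def Bnd (σ : A → List A) (p : ℕ) : ℕ :=
  (Finset.range (p+2)).sup (fun q' => Lsup σ q') + 2 * Lsup σ p + 2 * Lsup σ (p+1) + 2

lemma chain_exists (σ : A → List A) (hne : ∀ a, σ a ≠ []) (x : ℤ → A)
    (hx : x ∈ Xsub σ) (d₀ : A) :
    ∃ c : ℕ → A × A × A × ℕ,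
      (∀ p, GoodSt σ x p (c p)) ∧ (∀ p, LinkSt σ p (c p) (c (p+1))) := by
  classical
  have hx' : ∀ n : ℕ, ∃ a k l r, 1 ≤ k ∧
      substIter σ k [a] = l ++ seg x (-(n:ℤ)) (2*n+1) ++ r := by
    intro n
    obtain ⟨a, kk, hk, s, t, hst⟩ := hx n
    exact ⟨a, kk, s, t, hk, hst.symm⟩
  choose aF kF lF rF hk1 heq using hx'
  set D : ℕ → ℕ → A × A × A × ℕ :=
    fun n p => windowSt σ d₀ (kF n) (aF n) ((lF n).length + n) p with hD
  have hPN : ∀ p n, Bnd σ p ≤ n →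
      GoodSt σ x p (D n p) ∧ LinkSt σ p (D n p) (D n (p+1)) := by
    intro p n hn
    have hBval : Bnd σ p = (Finset.range (p+2)).sup (fun q' => Lsup σ q')
        + 2 * Lsup σ p + 2 * Lsup σ (p+1) + 2 := rfl
    have hlen3 : (substIter σ (kF n) [aF n]).length
        = (lF n).length + (2*n+1) + (rF n).length := by
      rw [heq n]
      simp [seg_length]
      omega
    have hk2 : p + 2 ≤ kF n := by
      by_contra hcon
      push_neg at hcon
      have h1 : (substIter σ (kF n) [aF n]).length ≤ Lsup σ (kF n) :=
        le_Lsup σ (kF n) (aF n)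
      have h2 : Lsup σ (kF n) ≤ (Finset.range (p+2)).sup (fun q' => Lsup σ q') :=
        Finset.le_sup (Finset.mem_range.2 (by omega))
      omega
    constructor
    · exact (window_core σ hne d₀ x n (kF n) p (aF n) (lF n) (rF n) (heq n)
        (by omega) (by omega)).2.2
    · exact window_link σ hne d₀ x n (kF n) p (aF n) (lF n) (rF n) (heq n)
        hk2 (by omega)
  have pig : ∀ (p : ℕ) (I : Set ℕ), I.Infinite →
      ∃ v : A × A × A × ℕ, {n ∈ I | Bnd σ p ≤ n ∧ D n p = v}.Infinite := by
    intro p I hI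
    have hI' : {n ∈ I | Bnd σ p ≤ n}.Infinite := by
      have : {n ∈ I | Bnd σ p ≤ n} = I \ Set.Iio (Bnd σ p) := by
        ext m
        simp [Set.mem_diff, Set.mem_Iio, not_lt]
      rw [this]
      exact hI.diff (Set.finite_Iio _)
    have hV : (Set.univ ×ˢ Set.univ ×ˢ Set.univ ×ˢ Set.Iic (Lsup σ p)
        : Set (A × A × A × ℕ)).Finite :=
      Set.finite_univ.prod (Set.finite_univ.prod (Set.finite_univ.prod (Set.finite_Iic _)))
    obtain ⟨v, hv⟩ := pigeon_infinite (fun n => D n p) _ hV _ hI' (by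
      rintro n ⟨hnI, hB⟩
      have hgood := (hPN p n hB).1
      have hjb : (D n p).2.2.2 < (substPow σ p (D n p).2.1).length := hgood.1
      have := le_Lsup σ p (D n p).2.1
      refine ⟨Set.mem_univ _, Set.mem_univ _, Set.mem_univ _, ?_⟩
      simp only [Set.mem_Iic]
      omega)
    refine ⟨v, ?_⟩
    have : {n ∈ {n ∈ I | Bnd σ p ≤ n} | D n p = v}
        = {n ∈ I | Bnd σ p ≤ n ∧ D n p = v} := by
      ext m
      simp only [Set.mem_setOf_eq]
      tauto
    rwa [this] at hv
  obtain ⟨c, hc⟩ := konig_chain D (Bnd σ) pig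
  refine ⟨c, fun p => ?_, fun p => ?_⟩
  · obtain ⟨n, hB, hD1, hD2⟩ := hc p
    rw [← hD1]
    exact (hPN p n hB).1
  · obtain ⟨n, hB, hD1, hD2⟩ := hc p
    rw [← hD1, ← hD2]
    exact (hPN p n hB).2

end Chain


section Builders

variable {A : Type*}

lemma nat_mono_cases {f : ℕ → ℕ} (hf : ∀ p, f p ≤ f (p+1)) :
    (∃ P, ∀ p, P ≤ p → f p = f P) ∨ (∀ N, ∃ P, ∀ p, P ≤ p → N ≤ f p) := by
  by_cases h : ∃ P, ∀ p, P ≤ p → f p = f P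
  · left; exact h
  · right
    push_neg at h
    have hmono : Monotone f := monotone_nat_of_le_succ hf
    intro N
    have hs : ∃ p, N ≤ f p := by
      induction N with
      | zero => exact ⟨0, Nat.zero_le _⟩
      | succ N ih =>
          obtain ⟨p, hp⟩ := ih
          obtain ⟨p', hp', hne'⟩ := h p
          have := hmono hp'
          exact ⟨p', by omega⟩
    obtain ⟨p, hp⟩ := hs
    exact ⟨p, fun q hq => le_trans hp (hmono hq)⟩

lemma lambda_build (σ : A → List A) (hne : ∀ a, σ a ≠ []) (x : ℤ → A)
    (d : ℤ) (P : ℕ) (l b : ℕ → A)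
    (hLang : ∀ n, P ≤ n → [l n, b n] ∈ Lang σ)
    (hlast : ∀ n, P ≤ n → (σ (l (n+1))).getLast? = some (l n))
    (hhead : ∀ n, P ≤ n → (σ (b (n+1))).head? = some (b n))
    (hreall : ∀ n, P ≤ n →
      seg x (d - ((substPow σ n (l n)).length : ℤ)) (substPow σ n (l n)).length
        = substPow σ n (l n))
    (hrealb : ∀ n, P ≤ n →
      seg x d (substPow σ n (b n)).length = substPow σ n (b n)) :
    ∃ s : ℕ → A × A, MemLambda σ s ∧
      ∃ w : ℤ → A, IsLambdaPoint σ s w ∧ x = shiftZ (-d) w := by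
  classical
  set d₀ := l P with hd₀
  set gg : ℕ → A × A := fun m => Nat.rec (l P, b P)
    (fun _ prev => ((σ prev.1).getLastD d₀, (σ prev.2).headD d₀)) m with hgg
  set s : ℕ → A × A := fun n => if P ≤ n then (l n, b n) else gg (P - n) with hs
  have hsge : ∀ n, P ≤ n → s n = (l n, b n) := by intro n h; simp [hs, h]
  have hgg0 : gg 0 = (l P, b P) := rfl
  have hggs : ∀ m, gg (m+1) = ((σ (gg m).1).getLastD d₀, (σ (gg m).2).headD d₀) :=
    fun m => rfl
  have hslt : ∀ n, n < P →
      s n = ((σ (s (n+1)).1).getLastD d₀, (σ (s (n+1)).2).headD d₀) := by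
    intro n h
    have h1 : s n = gg (P - n) := by simp [hs, Nat.not_le.2 h]
    have h2 : s (n+1) = gg (P - (n+1)) := by
      rcases Nat.lt_or_ge (n+1) P with h' | h'
      · simp [hs, Nat.not_le.2 h']
      · have hP : P = n+1 := by omega
        subst hP
        simp [hs, hgg0]
    have h3 : P - n = (P - (n+1)) + 1 := by omega
    rw [h1, h3, hggs, ← h2]
  have hlastAll : ∀ n, (σ (s (n+1)).1).getLast? = some (s n).1 := by
    intro n
    rcases Nat.lt_or_ge n P with h | h
    · rw [hslt n h]
      exact getLast?_of_ne_nil (hne _) d₀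
    · rw [hsge n h, hsge (n+1) (by omega)]
      exact hlast n h
  have hheadAll : ∀ n, (σ (s (n+1)).2).head? = some (s n).2 := by
    intro n
    rcases Nat.lt_or_ge n P with h | h
    · rw [hslt n h]
      exact head?_of_ne_nil (hne _) d₀
    · rw [hsge n h, hsge (n+1) (by omega)]
      exact hhead n h
  have hLangAll : ∀ n, [(s n).1, (s n).2] ∈ Lang σ := by
    have key : ∀ m, [(s (P - m)).1, (s (P - m)).2] ∈ Lang σ := by
      intro m
      induction m with
      | zero =>
          rw [Nat.sub_zero, hsge P (le_refl P)]
          exact hLang P (le_refl P)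
      | succ m ih =>
          by_cases hm : m < P
          · have h4 : (P - (m+1)) + 1 = P - m := by omega
            refine lang_pair_step ih ?_ ?_
            · have := hlastAll (P - (m+1)); rwa [h4] at this
            · have := hheadAll (P - (m+1)); rwa [h4] at this
          · have h5 : P - (m+1) = P - m := by omega
            rw [h5]; exact ih
    intro n
    rcases Nat.lt_or_ge n P with h | h
    · have h6 : n = P - (P - n) := by omega
      rw [h6]; exact key (P - n)
    · rw [hsge n h]; exact hLang n h
  have hsufstep : ∀ n, (substPow σ n (s n).1) <:+ (substPow σ (n+1) (s (n+1)).1) := by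
    intro n
    obtain ⟨u, hu⟩ := List.getLast?_eq_some_iff.1 (hlastAll n)
    rw [substPow_succ, hu, substIter_append]
    exact ⟨substIter σ n u, rfl⟩
  have hprestep : ∀ n, (substPow σ n (s n).2) <+: (substPow σ (n+1) (s (n+1)).2) := by
    intro n
    have h1 := hheadAll n
    obtain ⟨u, hu⟩ : ∃ u, σ (s (n+1)).2 = (s n).2 :: u := by
      cases hc : σ (s (n+1)).2 with
      | nil => rw [hc] at h1; simp at h1
      | cons c u => rw [hc] at h1; simp at h1; exact ⟨u, by rw [h1]⟩
    rw [substPow_succ, hu, substIter_cons]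
    exact ⟨substIter σ n u, rfl⟩
  have hsuf : ∀ m, (substPow σ (P - m) (s (P - m)).1) <:+ (substPow σ P (s P).1) := by
    intro m
    induction m with
    | zero => rw [Nat.sub_zero]
    | succ m ih =>
        by_cases hm : m < P
        · have h4 : (P - (m+1)) + 1 = P - m := by omega
          have hstep := hsufstep (P - (m+1))
          rw [h4] at hstep
          exact hstep.trans ih
        · have h5 : P - (m+1) = P - m := by omega
          rw [h5]; exact ih
  have hpre : ∀ m, (substPow σ (P - m) (s (P - m)).2) <+: (substPow σ P (s P).2) := by
    intro m
    induction m with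
    | zero => rw [Nat.sub_zero]
    | succ m ih =>
        by_cases hm : m < P
        · have h4 : (P - (m+1)) + 1 = P - m := by omega
          have hstep := hprestep (P - (m+1))
          rw [h4] at hstep
          exact hstep.trans ih
        · have h5 : P - (m+1) = P - m := by omega
          rw [h5]; exact ih
  have hsP : s P = (l P, b P) := hsge P (le_refl P)
  have hrealbAll : ∀ n, seg x d (substPow σ n (s n).2).length = substPow σ n (s n).2 := by
    intro n
    rcases Nat.lt_or_ge n P with h | h
    · have h6 : P - (P - n) = n := by omega
      have hp := hpre (P - n)
      rw [h6] at hp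
      obtain ⟨tt, htt⟩ := hp
      have hP := hrealb P (le_refl P)
      have hsP2 : (s P).2 = b P := by rw [hsP]
      rw [← hsP2] at hP
      rw [← htt, List.length_append] at hP
      exact (seg_split hP).1
    · rw [hsge n h]; exact hrealb n h
  have hreallAll : ∀ n, seg x (d - ((substPow σ n (s n).1).length : ℤ))
      (substPow σ n (s n).1).length = substPow σ n (s n).1 := by
    intro n
    rcases Nat.lt_or_ge n P with h | h
    · have h6 : P - (P - n) = n := by omega
      have hp := hsuf (P - n)
      rw [h6] at hp
      obtain ⟨tt, htt⟩ := hp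
      have hP := hreall P (le_refl P)
      have hsP1 : (s P).1 = l P := by rw [hsP]
      rw [← hsP1] at hP
      rw [← htt, List.length_append] at hP
      have h7 := (seg_split hP).2
      rw [show d - ((tt.length + (substPow σ n (s n).1).length : ℕ) : ℤ) + (tt.length:ℤ)
          = d - ((substPow σ n (s n).1).length : ℤ) by push_cast; ring] at h7
      exact h7
    · rw [hsge n h]; exact hreall n h
  refine ⟨s, fun n => ⟨hLangAll n, hlastAll n, hheadAll n⟩, shiftZ d x, ?_, ?_⟩
  · intro n
    rw [seg_shiftZ, seg_append]
    congr 1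
    · rw [show -((substPow σ n (s n).1).length : ℤ) + d
          = d - ((substPow σ n (s n).1).length : ℤ) by ring]
      exact hreallAll n
    · rw [show -((substPow σ n (s n).1).length : ℤ) + d
          + ((substPow σ n (s n).1).length : ℤ) = d by ring]
      exact hrealbAll n
  · funext m
    show x m = x ((m + -d) + d)
    congr 1
    ring

lemma uniform_growth [Fintype A] (σ : A → List A)
    (hlen : ∀ a : A, Filter.Tendsto (fun n => (substPow σ n a).length)
      Filter.atTop Filter.atTop) (N : ℕ) :
    ∃ M, ∀ m, M ≤ m → ∀ a : A, N ≤ (substPow σ m a).length := by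
  classical
  have h : ∀ a : A, ∃ Ma, ∀ m, Ma ≤ m → N ≤ (substPow σ m a).length := by
    intro a
    obtain ⟨Ma, hMa⟩ := (Filter.tendsto_atTop.1 (hlen a) N).exists_forall_of_atTop
    exact ⟨Ma, fun m hm => hMa m hm⟩
  choose Ma hMa using h
  refine ⟨Finset.univ.sup Ma, fun m hm a => ?_⟩
  exact hMa a m (le_trans (Finset.le_sup (Finset.mem_univ a)) hm)

lemma xsub_shift {σ : A → List A} {x : ℤ → A} (hx : x ∈ Xsub σ) (k : ℤ) :
    shiftZ k x ∈ Xsub σ := by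
  intro n
  set m := n + k.natAbs with hm
  have hseg : seg (shiftZ k x) (-(n:ℤ)) (2*n+1) = seg x (-(n:ℤ) + k) (2*n+1) :=
    seg_shiftZ x k _ _
  have hd : (-(n:ℤ) + k) = -(m:ℤ) + (((k + k.natAbs).toNat : ℕ) : ℤ) := by
    rw [hm]
    omega
  have hinf : seg x (-(n:ℤ) + k) (2*n+1) <:+: seg x (-(m:ℤ)) (2*m+1) := by
    rw [hd]
    exact seg_infix rfl _ _ (by rw [hm]; omega)
  rw [hseg]
  exact lang_infix_closed hinf (hx m)

lemma lambda_point_mem_Xsub [Fintype A] {σ : A → List A}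
    (hlen : ∀ a : A, Filter.Tendsto (fun n => (substPow σ n a).length)
      Filter.atTop Filter.atTop)
    {s : ℕ → A × A} {w : ℤ → A} (hML : MemLambda σ s) (hLP : IsLambdaPoint σ s w) :
    w ∈ Xsub σ := by
  intro n
  obtain ⟨M, hM⟩ := uniform_growth σ hlen (n+1)
  set m := M with hmdef
  have h1 : n + 1 ≤ (substPow σ m (s m).1).length := hM m (le_refl _) _
  have h2 : n + 1 ≤ (substPow σ m (s m).2).length := hM m (le_refl _) _
  have hseg := hLP m
  set L1 := (substPow σ m (s m).1).length with hL1
  set L2 := (substPow σ m (s m).2).length with hL2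
  have hinf : seg w (-(n:ℤ)) (2*n+1) <:+: substPow σ m (s m).1 ++ substPow σ m (s m).2 := by
    have hd : -(n:ℤ) = -(L1:ℤ) + ((L1 - n : ℕ) : ℤ) := by push_cast [Nat.cast_sub (by omega : n ≤ L1)]; ring
    rw [hd]
    exact seg_infix hseg _ _ (by omega)
  have hcat : substPow σ m (s m).1 ++ substPow σ m (s m).2
      = substIter σ m [(s m).1, (s m).2] := by
    have : [(s m).1, (s m).2] = [(s m).1] ++ [(s m).2] := rfl
    rw [this, substIter_append]
    rfl
  rw [hcat] at hinf
  exact lang_infix_closed hinf (lang_substIter m (hML m).1)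

lemma mzero_mem_Xsub {σ : A → List A} {t : ℕ → A × ℕ} {x : ℤ → A}
    (hMZ : MZero σ t) (hMP : IsMPoint σ t x) : x ∈ Xsub σ := by
  intro n
  obtain ⟨n0, hn0⟩ := hMZ.2 (n+1)
  obtain ⟨hj, hr⟩ := hn0 n0 (le_refl _)
  set m := n0 with hmdef
  have hseg := hMP m
  have hinf : seg x (-(n:ℤ)) (2*n+1) <:+: substPow σ m (t m).1 := by
    have hd : -(n:ℤ) = -((jSeq σ t m : ℕ):ℤ) + ((jSeq σ t m - n : ℕ) : ℤ) := by
      push_cast [Nat.cast_sub (by omega : n ≤ jSeq σ t m)]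
      ring
    rw [hd]
    exact seg_infix hseg _ _ (by omega)
  have hmem : substPow σ m (t m).1 ∈ Lang σ := by
    have hocc := hMZ.1.2 m
    have hlt : (t (m+1)).2 < (σ (t (m+1)).1).length := by
      by_contra hcon
      push_neg at hcon
      rw [List.getElem?_eq_none hcon] at hocc
      simp at hocc
    have hsp : σ (t (m+1)).1 = (σ (t (m+1)).1).take (t (m+1)).2
        ++ (t m).1 :: (σ (t (m+1)).1).drop ((t (m+1)).2 + 1) := by
      have hg : (σ (t (m+1)).1)[(t (m+1)).2] = (t m).1 := by
        have := List.getElem?_eq_getElem hlt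
        rw [this] at hocc
        exact Option.some_injective _ hocc
      conv_lhs => rw [← List.take_append_drop (t (m+1)).2 (σ (t (m+1)).1)]
      rw [List.drop_eq_getElem_cons hlt, hg]
    have hinf2 : [(t m).1] <:+: σ (t (m+1)).1 := by
      rw [hsp]
      exact ⟨(σ (t (m+1)).1).take (t (m+1)).2, (σ (t (m+1)).1).drop ((t (m+1)).2 + 1),
        by simp⟩
    refine ⟨(t (m+1)).1, m + 1, by omega, ?_⟩
    have := substIter_infix σ m hinf2
    rwa [← substPow_succ] at this
  exact lang_infix_closed hinf hmem

end Builders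

/-- If `|σ^n(a)| → ∞` for every letter `a`, then
`X_σ = {w(m̄) : m̄ ∈ M₀} ∪ ⋃_{s̄ ∈ Λ} Orb_{T_σ}(w(s̄))`. -/
theorem phase_space_description
    {A : Type*} [Fintype A] (σ : A → List A) (hne : ∀ a, σ a ≠ [])
    (hunc : ¬ (Xsub σ).Countable)
    (hlen : ∀ a : A, Filter.Tendsto (fun n => (substPow σ n a).length)
      Filter.atTop Filter.atTop) :
    Xsub σ =
      {x : ℤ → A | ∃ t : ℕ → A × ℕ, MZero σ t ∧ IsMPoint σ t x} ∪
      {x : ℤ → A | ∃ s : ℕ → A × A, MemLambda σ s ∧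
        ∃ w : ℤ → A, IsLambdaPoint σ s w ∧ ∃ k : ℤ, x = shiftZ k w} := by
  classical
  ext x
  simp only [Set.mem_union, Set.mem_setOf_eq]
  constructor
  · intro hx
    obtain ⟨c, hGood, hLink⟩ := chain_exists σ hne x hx (x 0)
    choose iF hIc hJc hI0 hIl hRc using hLink
    have hjc0 : (c 0).2.2.2 = 0 := by
      have h0 := (hGood 0).1
      have h1 : (substPow σ 0 (c 0).2.1).length = 1 := rfl
      omega
    have hJmono : ∀ p, (c p).2.2.2 ≤ (c (p+1)).2.2.2 := by
      intro p
      have := hJc p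
      omega
    have hRmono : ∀ p, (substPow σ p (c p).2.1).length - (c p).2.2.2
        ≤ (substPow σ (p+1) (c (p+1)).2.1).length - (c (p+1)).2.2.2 := by
      intro p
      have h1 := hRc p
      have h2 := (hGood p).1
      have h3 := (hGood (p+1)).1
      omega
    rcases nat_mono_cases (f := fun p => (c p).2.2.2) hJmono with ⟨P, hP⟩ | hjInf
    · -- left edge of the central block stabilizes: Λ-point, shifted by jc P
      right
      have hi0 : ∀ p, P ≤ p → iF p = 0 := by
        intro p hp
        by_contra hcon
        have htake : (σ (c (p+1)).2.1).take (iF p) ≠ [] := by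
          intro h0
          rcases List.take_eq_nil_iff.1 h0 with h | h
          · exact hcon h
          · exact hne _ h
        have hlen0 : (substWord (substPow σ p) ((σ (c (p+1)).2.1).take (iF p))).length ≠ 0 := by
          rw [← substIter_eq_flatMap]
          intro h0
          exact substIter_ne_nil σ hne p htake (List.length_eq_zero_iff.1 h0)
        have e1 := hJc p
        have e2 := hP p hp
        have e3 := hP (p+1) (by omega)
        omega
      obtain ⟨s, hML, w, hLP, hxw⟩ := lambda_build σ hne x (-((c P).2.2.2 : ℤ)) P
        (fun n => (c n).1) (fun n => (c n).2.1)
        (fun n hn => (hGood n).2.2.2.2.1)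
        (fun n hn => (hI0 n (hi0 n hn)).1)
        (fun n hn => (hI0 n (hi0 n hn)).2)
        (fun n hn => by
          have hg := (hGood n).2.2.1
          have he : (-((c P).2.2.2 : ℤ)) - ((substPow σ n (c n).1).length : ℤ)
              = -((c n).2.2.2 : ℤ) - ((substPow σ n (c n).1).length : ℤ) := by
            rw [hP n hn]
          rw [he]
          exact hg)
        (fun n hn => by
          have hg := (hGood n).2.1
          have he : (-((c P).2.2.2 : ℤ)) = -((c n).2.2.2 : ℤ) := by rw [hP n hn]
          rw [he]
          exact hg)
      exact ⟨s, hML, w, hLP, _, hxw⟩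
    · rcases nat_mono_cases
        (f := fun p => (substPow σ p (c p).2.1).length - (c p).2.2.2) hRmono
        with ⟨P, hPr⟩ | hrInf
      · -- right edge stabilizes: Λ-point, shifted
        right
        have hil : ∀ p, P ≤ p → iF p + 1 = (σ (c (p+1)).2.1).length := by
          intro p hp
          have hlt : iF p < (σ (c (p+1)).2.1).length :=
            (List.getElem?_eq_some_iff.1 (hIc p)).1
          have hdrop : (σ (c (p+1)).2.1).drop (iF p + 1) = [] := by
            by_contra hcon
            have hlen0 : (substWord (substPow σ p)
                ((σ (c (p+1)).2.1).drop (iF p + 1))).length ≠ 0 := by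
              rw [← substIter_eq_flatMap]
              intro h0
              exact substIter_ne_nil σ hne p hcon (List.length_eq_zero_iff.1 h0)
            have e1 := hRc p
            have e2 := hPr p hp
            have e3 := hPr (p+1) (by omega)
            have h2 := (hGood p).1
            have h3 := (hGood (p+1)).1
            omega
          have := List.drop_eq_nil_iff.1 hdrop
          omega
        set E := (substPow σ P (c P).2.1).length - (c P).2.2.2 with hE
        obtain ⟨s, hML, w, hLP, hxw⟩ := lambda_build σ hne x ((E:ℕ):ℤ) P
          (fun n => (c n).2.1) (fun n => (c n).2.2.1)
          (fun n hn => (hGood n).2.2.2.2.2)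
          (fun n hn => (hIl n (hil n hn)).1)
          (fun n hn => (hIl n (hil n hn)).2)
          (fun n hn => by
            have hg := (hGood n).2.1
            have hrr := hPr n hn
            have hb := (hGood n).1
            have he : ((E:ℕ):ℤ) - ((substPow σ n (c n).2.1).length : ℤ)
                = -((c n).2.2.2 : ℤ) := by
              omega
            rw [he]
            exact hg)
          (fun n hn => by
            have hg := (hGood n).2.2.2.1
            have hrr := hPr n hn
            have hb := (hGood n).1
            have he : ((E:ℕ):ℤ) = -((c n).2.2.2 : ℤ)
                + ((substPow σ n (c n).2.1).length : ℤ) := by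
              omega
            rw [he]
            exact hg)
        exact ⟨s, hML, w, hLP, _, hxw⟩
      · -- both edges escape: M₀-point
        left
        refine ⟨fun p => ((c p).2.1, if p = 0 then 0 else iF (p - 1)), ?_, ?_⟩
        · constructor
          · constructor
            · simp
            · intro j
              simpa using hIc j
          · -- growth condition
            have hjSeqEq : ∀ p, jSeq σ (fun p => ((c p).2.1, if p = 0 then 0 else iF (p - 1))) p
                = (c p).2.2.2 := by
              intro p
              induction p with
              | zero =>
                  show 0 = (c 0).2.2.2
                  omega
              | succ p ih =>
                  show jSeq σ _ p + _ = _
                  rw [ih]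
                  have := hJc p
                  simpa using this.symm
            intro N
            obtain ⟨P1, h1⟩ := hjInf N
            obtain ⟨P2, h2⟩ := hrInf N
            refine ⟨max P1 P2, fun n hn => ?_⟩
            have hb := (hGood n).1
            have hj1 := h1 n (le_trans (le_max_left _ _) hn)
            have hr2 := h2 n (le_trans (le_max_right _ _) hn)
            rw [hjSeqEq]
            refine ⟨hj1, ?_⟩
            show (c n).2.2.2 + N ≤ (substPow σ n (c n).2.1).length
            omega
        · intro n
          have hjSeqEq : ∀ p, jSeq σ (fun p => ((c p).2.1, if p = 0 then 0 else iF (p - 1))) p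
              = (c p).2.2.2 := by
            intro p
            induction p with
            | zero =>
                show 0 = (c 0).2.2.2
                omega
            | succ p ih =>
                show jSeq σ _ p + _ = _
                rw [ih]
                have := hJc p
                simpa using this.symm
          rw [hjSeqEq]
          exact (hGood n).2.1
  · rintro (⟨t, hMZ, hMP⟩ | ⟨s, hML, w, hLP, k, rfl⟩)
    · exact mzero_mem_Xsub hMZ hMP
    · exact xsub_shift (lambda_point_mem_Xsub hlen hML hLP) k

end PaperStmt
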